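/- The DMC rule fails S-STAY: in the SOCG with N = {1,2,3}, π = (1,2,3), all proper-subset coalition values 0 and v({1,2,3}) = 1, DMC allocates (0,0,1), but players 1 and 2 satisfy v({1,2,3}) > v({1,2,3}∖{j}) and receive no increase at player 3's arrival, violating S-STAY. -/

import Mathlib

/-- The set of the first `k` arrived players under the arrival order `(0, 1, 2)`. -/
def prefix3 (k : ℕ) : Finset (Fin 3) :=
  Finset.univ.filter (fun p => (p : ℕ) < k)

/-- Cumulative DMC share of player `j` after step `t` (steps `0, 1, 2`; the player
arriving at step `s` receives exactly the marginal contribution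
`v (prefix3 (s+1)) - v (prefix3 s)` and nothing later). -/
noncomputable def dmcCum (v : Finset (Fin 3) → ℝ) (j : Fin 3) (t : ℕ) : ℝ :=
  ∑ s ∈ Finset.range (t + 1),
    if (j : ℕ) = s then v (prefix3 (s + 1)) - v (prefix3 s) else 0

lemma prefix3_three : prefix3 3 = Finset.univ := by decide

lemma prefix3_ne (k : ℕ) (hk : k < 3) : prefix3 k ≠ Finset.univ := by
  intro h
  have : (2 : Fin 3) ∈ prefix3 k := h ▸ Finset.mem_univ _
  simp [prefix3] at this
  omega

/-- The DMC rule fails S-STAY: in the SOCG on players `0, 1, 2` (arrival order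
`(0,1,2)`) with all proper coalitions worth `0` and the grand coalition worth `1`,
DMC allocates `(0, 0, 1)`; players `0` and `1` satisfy
`v univ > v (univ \ {j})` at the contributional arrival of player `2`, yet their
cumulative shares do not strictly increase at that step, violating S-STAY. -/
theorem dmc_fails_sstay (v : Finset (Fin 3) → ℝ)
    (hproper : ∀ S : Finset (Fin 3), S ≠ Finset.univ → v S = 0)
    (hfull : v Finset.univ = 1) :
    dmcCum v 0 2 = 0 ∧ dmcCum v 1 2 = 0 ∧ dmcCum v 2 2 = 1 ∧
    v Finset.univ > v (Finset.univ.erase 0) ∧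
    v Finset.univ > v (Finset.univ.erase 1) ∧
    v Finset.univ > v (Finset.univ.erase 2) ∧
    ¬ dmcCum v 0 2 > dmcCum v 0 0 ∧
    ¬ dmcCum v 1 2 > dmcCum v 1 1 := by
  have h0 : v (prefix3 0) = 0 := hproper _ (prefix3_ne 0 (by norm_num))
  have h1 : v (prefix3 1) = 0 := hproper _ (prefix3_ne 1 (by norm_num))
  have h2 : v (prefix3 2) = 0 := hproper _ (prefix3_ne 2 (by norm_num))
  have h3 : v (prefix3 3) = 1 := by rw [prefix3_three]; exact hfull
  have he : ∀ j : Fin 3, v (Finset.univ.erase j) = 0 := fun j =>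
    hproper _ (by
      intro h
      have := h ▸ Finset.mem_univ j
      exact (Finset.notMem_erase j _) this)
  refine ⟨?_, ?_, ?_, ?_, ?_, ?_, ?_, ?_⟩ <;>
    simp [dmcCum, Finset.sum_range_succ, h0, h1, h2, h3, he, hfull]
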